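/- Every continuous group homomorphism from SO(3) to SU(2) is trivial. -/

import Mathlib

set_option maxHeartbeats 1000000

open Matrix Real

abbrev SU2 := ↥(Matrix.specialUnitaryGroup (Fin 2) ℂ)

lemma su2_sq (U : SU2) (h : U * U = 1) :
    (U : Matrix (Fin 2) (Fin 2) ℂ) = 1 ∨ (U : Matrix (Fin 2) (Fin 2) ℂ) = -1 := by
  obtain ⟨hu, hd⟩ := Matrix.mem_specialUnitaryGroup_iff.mp U.2
  have hm : (U : Matrix (Fin 2) (Fin 2) ℂ) * U = 1 := by
    have := congrArg Subtype.val h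
    simpa using this
  set M : Matrix (Fin 2) (Fin 2) ℂ := (U : Matrix (Fin 2) (Fin 2) ℂ) with hM
  have h00 := congr_fun (congr_fun hm 0) 0
  have h01 := congr_fun (congr_fun hm 0) 1
  have h10 := congr_fun (congr_fun hm 1) 0
  have h11 := congr_fun (congr_fun hm 1) 1
  simp [Matrix.mul_apply, Fin.sum_univ_two, Matrix.one_apply] at h00 h01 h10 h11
  rw [Matrix.det_fin_two] at hd
  by_cases hc : M 0 0 + M 1 1 = 0
  · exfalso
    have : (0:ℂ) = 2 := by linear_combination hd + h00 - M 0 0 * hc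
    norm_num at this
  · have hb : M 0 1 = 0 := by
      have : M 0 1 * (M 0 0 + M 1 1) = 0 := by linear_combination h01
      rcases mul_eq_zero.mp this with h | h
      · exact h
      · exact absurd h hc
    have hcc : M 1 0 = 0 := by
      have : M 1 0 * (M 0 0 + M 1 1) = 0 := by linear_combination h10
      rcases mul_eq_zero.mp this with h | h
      · exact h
      · exact absurd h hc
    have ha2 : M 0 0 * M 0 0 = 1 := by linear_combination h00 - M 1 0 * hb
    have had : M 1 1 = M 0 0 := by
      have had1 : M 0 0 * M 1 1 = 1 := by linear_combination hd + M 1 0 * hb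
      exact mul_left_cancel₀ (a := M 0 0)
        (by rintro h; rw [h] at ha2; simp at ha2) (had1.trans ha2.symm)
    have : M 0 0 = 1 ∨ M 0 0 = -1 := by
      have : (M 0 0 - 1) * (M 0 0 + 1) = 0 := by linear_combination ha2
      rcases mul_eq_zero.mp this with h | h
      · left; linear_combination h
      · right; linear_combination h
    rcases this with h1 | h1
    · left; ext i j
      fin_cases i <;> fin_cases j <;> simp_all [Matrix.one_apply]
    · right; ext i j
      fin_cases i <;> fin_cases j <;> simp_all [Matrix.one_apply]

lemma su2_comm (x y : SU2) (hx : x * x = 1) (hy : y * y = 1) : x * y = y * x := by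
  have hx' := su2_sq x hx
  have hy' := su2_sq y hy
  apply Subtype.ext
  show (x:Matrix (Fin 2) (Fin 2) ℂ) * y = (y:Matrix (Fin 2) (Fin 2) ℂ) * x
  rcases hx' with h | h <;> rcases hy' with h' | h' <;> rw [h, h'] <;> simp

abbrev SO3 := ↥(Matrix.specialOrthogonalGroup (Fin 3) ℝ)

noncomputable def Rz (θ : ℝ) : Matrix (Fin 3) (Fin 3) ℝ :=
  !![cos θ, -sin θ, 0; sin θ, cos θ, 0; 0, 0, 1]

noncomputable def Rx (θ : ℝ) : Matrix (Fin 3) (Fin 3) ℝ :=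
  !![1, 0, 0; 0, cos θ, -sin θ; 0, sin θ, cos θ]

noncomputable def Tm (θ : ℝ) : Matrix (Fin 3) (Fin 3) ℝ :=
  !![cos θ, sin θ, 0; sin θ, -cos θ, 0; 0, 0, -1]

noncomputable def Um (θ : ℝ) : Matrix (Fin 3) (Fin 3) ℝ :=
  !![-1, 0, 0; 0, cos θ, sin θ; 0, sin θ, -cos θ]

lemma mem_SO3 (A : Matrix (Fin 3) (Fin 3) ℝ) (h1 : A * Aᵀ = 1) (h2 : A.det = 1) :
    A ∈ Matrix.specialOrthogonalGroup (Fin 3) ℝ := by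
  rw [Matrix.mem_specialUnitaryGroup_iff]
  refine ⟨?_, h2⟩
  rw [Matrix.mem_unitaryGroup_iff]
  have hstar : star A = Aᵀ := by
    ext i j; simp [Matrix.star_apply]
  rw [hstar]; exact h1

lemma Rz_transpose (θ : ℝ) : (Rz θ)ᵀ = !![cos θ, sin θ, 0; -sin θ, cos θ, 0; 0, 0, 1] := by
  ext i j; fin_cases i <;> fin_cases j <;> rfl

lemma Rz_mem (θ : ℝ) : Rz θ ∈ Matrix.specialOrthogonalGroup (Fin 3) ℝ := by
  apply mem_SO3
  · rw [Rz_transpose, Rz, Matrix.mul_fin_three, Matrix.one_fin_three]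
    ext i j
    fin_cases i <;> fin_cases j <;> simp [Matrix.vecHead, Matrix.vecTail] <;>
      nlinarith [Real.sin_sq_add_cos_sq θ]
  · rw [Matrix.det_fin_three]
    simp [Rz]
    nlinarith [Real.sin_sq_add_cos_sq θ]

lemma Rx_transpose (θ : ℝ) : (Rx θ)ᵀ = !![1, 0, 0; 0, cos θ, sin θ; 0, -sin θ, cos θ] := by
  ext i j; fin_cases i <;> fin_cases j <;> rfl

lemma Rx_mem (θ : ℝ) : Rx θ ∈ Matrix.specialOrthogonalGroup (Fin 3) ℝ := by
  apply mem_SO3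
  · rw [Rx_transpose, Rx, Matrix.mul_fin_three, Matrix.one_fin_three]
    ext i j
    fin_cases i <;> fin_cases j <;> simp [Matrix.vecHead, Matrix.vecTail] <;>
      nlinarith [Real.sin_sq_add_cos_sq θ]
  · rw [Matrix.det_fin_three]
    simp [Rx]
    nlinarith [Real.sin_sq_add_cos_sq θ]

lemma Tm_transpose (θ : ℝ) : (Tm θ)ᵀ = Tm θ := by
  ext i j; fin_cases i <;> fin_cases j <;> rfl

lemma Tm_mem (θ : ℝ) : Tm θ ∈ Matrix.specialOrthogonalGroup (Fin 3) ℝ := by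
  apply mem_SO3
  · rw [Tm_transpose]
    unfold Tm
    rw [Matrix.mul_fin_three, Matrix.one_fin_three]
    ext i j
    fin_cases i <;> fin_cases j <;> simp [Matrix.vecHead, Matrix.vecTail] <;>
      nlinarith [Real.sin_sq_add_cos_sq θ]
  · rw [Matrix.det_fin_three]
    simp [Tm]
    nlinarith [Real.sin_sq_add_cos_sq θ]

lemma Um_transpose (θ : ℝ) : (Um θ)ᵀ = Um θ := by
  ext i j; fin_cases i <;> fin_cases j <;> rfl

lemma Um_mem (θ : ℝ) : Um θ ∈ Matrix.specialOrthogonalGroup (Fin 3) ℝ := by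
  apply mem_SO3
  · rw [Um_transpose]
    unfold Um
    rw [Matrix.mul_fin_three, Matrix.one_fin_three]
    ext i j
    fin_cases i <;> fin_cases j <;> simp [Matrix.vecHead, Matrix.vecTail] <;>
      nlinarith [Real.sin_sq_add_cos_sq θ]
  · rw [Matrix.det_fin_three]
    simp [Um]
    nlinarith [Real.sin_sq_add_cos_sq θ]

noncomputable def RzS (θ : ℝ) : SO3 := ⟨Rz θ, Rz_mem θ⟩
noncomputable def RxS (θ : ℝ) : SO3 := ⟨Rx θ, Rx_mem θ⟩
noncomputable def TS (θ : ℝ) : SO3 := ⟨Tm θ, Tm_mem θ⟩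
noncomputable def US (θ : ℝ) : SO3 := ⟨Um θ, Um_mem θ⟩

lemma TS_sq (θ : ℝ) : TS θ * TS θ = 1 := by
  apply Subtype.ext
  show Tm θ * Tm θ = 1
  unfold Tm
  rw [Matrix.mul_fin_three, Matrix.one_fin_three]
  ext i j
  fin_cases i <;> fin_cases j <;> simp [Matrix.vecHead, Matrix.vecTail] <;>
    nlinarith [Real.sin_sq_add_cos_sq θ]

lemma US_sq (θ : ℝ) : US θ * US θ = 1 := by
  apply Subtype.ext
  show Um θ * Um θ = 1
  unfold Um
  rw [Matrix.mul_fin_three, Matrix.one_fin_three]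
  ext i j
  fin_cases i <;> fin_cases j <;> simp [Matrix.vecHead, Matrix.vecTail] <;>
    nlinarith [Real.sin_sq_add_cos_sq θ]

lemma TS_mul (a b : ℝ) : TS a * TS b = RzS (a - b) := by
  apply Subtype.ext
  show Tm a * Tm b = Rz (a - b)
  unfold Tm Rz
  rw [Matrix.mul_fin_three]
  ext i j
  fin_cases i <;> fin_cases j <;>
    simp [Matrix.vecHead, Matrix.vecTail, Real.cos_sub, Real.sin_sub] <;> ring

lemma US_mul (a b : ℝ) : US a * US b = RxS (a - b) := by
  apply Subtype.ext
  show Um a * Um b = Rx (a - b)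
  unfold Um Rx
  rw [Matrix.mul_fin_three]
  ext i j
  fin_cases i <;> fin_cases j <;>
    simp [Matrix.vecHead, Matrix.vecTail, Real.cos_sub, Real.sin_sub] <;> ring

lemma RzS_sq (θ : ℝ) : RzS (θ/2) * RzS (θ/2) = RzS θ := by
  have h2 : 2 * (θ/2) = θ := by ring
  have hc := Real.cos_two_mul (θ/2)
  have hs := Real.sin_two_mul (θ/2)
  rw [h2] at hc hs
  apply Subtype.ext
  show Rz (θ/2) * Rz (θ/2) = Rz θ
  unfold Rz
  rw [Matrix.mul_fin_three]
  ext i j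
  fin_cases i <;> fin_cases j <;> simp [Matrix.vecHead, Matrix.vecTail] <;>
    nlinarith [Real.sin_sq_add_cos_sq (θ/2), hc, hs]

lemma RxS_sq (θ : ℝ) : RxS (θ/2) * RxS (θ/2) = RxS θ := by
  have h2 : 2 * (θ/2) = θ := by ring
  have hc := Real.cos_two_mul (θ/2)
  have hs := Real.sin_two_mul (θ/2)
  rw [h2] at hc hs
  apply Subtype.ext
  show Rx (θ/2) * Rx (θ/2) = Rx θ
  unfold Rx
  rw [Matrix.mul_fin_three]
  ext i j
  fin_cases i <;> fin_cases j <;> simp [Matrix.vecHead, Matrix.vecTail] <;>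
    nlinarith [Real.sin_sq_add_cos_sq (θ/2), hc, hs]

lemma circle_param {x y : ℝ} (h : x^2 + y^2 = 1) : ∃ θ : ℝ, cos θ = x ∧ sin θ = y := by
  have hx1 : -1 ≤ x := by nlinarith [sq_nonneg y]
  have hx2 : x ≤ 1 := by nlinarith [sq_nonneg y]
  rcases le_or_gt 0 y with hy | hy
  · refine ⟨Real.arccos x, Real.cos_arccos hx1 hx2, ?_⟩
    rw [Real.sin_arccos, show 1 - x^2 = y^2 by linarith, Real.sqrt_sq hy]
  · refine ⟨-Real.arccos x, by rw [Real.cos_neg]; exact Real.cos_arccos hx1 hx2, ?_⟩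
    rw [Real.sin_neg, Real.sin_arccos, show 1 - x^2 = y^2 by linarith,
      Real.sqrt_sq_eq_abs, abs_of_neg hy, neg_neg]



lemma RzRxRz (a b c : ℝ) : Rz a * Rx b * Rz c =
    !![cos a * cos c - sin a * cos b * sin c,
       -(cos a * sin c) - sin a * cos b * cos c,
       sin a * sin b;
       sin a * cos c + cos a * cos b * sin c,
       -(sin a * sin c) + cos a * cos b * cos c,
       -(cos a * sin b);
       sin b * sin c, sin b * cos c, cos b] := by
  simp only [Rz, Rx]
  rw [Matrix.mul_fin_three, Matrix.mul_fin_three]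
  ext i j
  fin_cases i <;> fin_cases j <;> simp [Matrix.vecHead, Matrix.vecTail] <;> ring

lemma euler (g : SO3) : ∃ α β γ : ℝ, g = RzS α * RxS β * RzS γ := by
  obtain ⟨A, hgmem⟩ := g
  obtain ⟨hu, hdet⟩ := Matrix.mem_specialUnitaryGroup_iff.mp hgmem
  have hstar : star A = Aᵀ := by
    ext i j; simp [Matrix.star_apply]
  have hAAT : A * Aᵀ = 1 := by rw [← hstar]; exact hu.2
  have hATA : Aᵀ * A = 1 := by rw [← hstar]; exact hu.1
  have hadj : Aᵀ = A.adjugate := by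
    calc Aᵀ = Aᵀ * (A * A.adjugate) := by rw [Matrix.mul_adjugate, hdet]; simp
    _ = (Aᵀ * A) * A.adjugate := by rw [Matrix.mul_assoc]
    _ = A.adjugate := by rw [hATA, one_mul]
  have hadj_a : A 0 0 = A 1 1 * A 2 2 - A 1 2 * A 2 1 := by
    have := congr_fun (congr_fun hadj 0) 0
    simpa [Matrix.adjugate_fin_three, Matrix.transpose_apply] using this
  have hadj_b : A 0 1 = -(A 1 0 * A 2 2) + A 1 2 * A 2 0 := by
    have := congr_fun (congr_fun hadj 1) 0
    simpa [Matrix.adjugate_fin_three, Matrix.transpose_apply] using this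
  have hadj_d : A 1 0 = -(A 0 1 * A 2 2) + A 0 2 * A 2 1 := by
    have := congr_fun (congr_fun hadj 0) 1
    simpa [Matrix.adjugate_fin_three, Matrix.transpose_apply] using this
  have hadj_e : A 1 1 = A 0 0 * A 2 2 - A 0 2 * A 2 0 := by
    have := congr_fun (congr_fun hadj 1) 1
    simpa [Matrix.adjugate_fin_three, Matrix.transpose_apply] using this
  have hC3 : A 0 2 ^ 2 + A 1 2 ^ 2 + A 2 2 ^ 2 = 1 := by
    have := congr_fun (congr_fun hATA 2) 2
    simp [Matrix.mul_apply, Fin.sum_univ_three, Matrix.transpose_apply,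
      Matrix.one_apply] at this
    linear_combination this
  have hR3 : A 2 0 ^ 2 + A 2 1 ^ 2 + A 2 2 ^ 2 = 1 := by
    have := congr_fun (congr_fun hAAT 2) 2
    simp [Matrix.mul_apply, Fin.sum_univ_three, Matrix.transpose_apply,
      Matrix.one_apply] at this
    linear_combination this
  have hC1 : A 0 0 ^ 2 + A 1 0 ^ 2 + A 2 0 ^ 2 = 1 := by
    have := congr_fun (congr_fun hATA 0) 0
    simp [Matrix.mul_apply, Fin.sum_univ_three, Matrix.transpose_apply,
      Matrix.one_apply] at this
    linear_combination this
  clear hu hdet hadj hstar hAAT hATA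
  rcases eq_or_ne (A 0 2 ^ 2 + A 1 2 ^ 2) 0 with hcf | hcf
  · -- degenerate case : third column is (0, 0, ±1)
    have hc : A 0 2 = 0 := by
      have h1 : A 0 2 ^ 2 = 0 := by nlinarith [sq_nonneg (A 0 2), sq_nonneg (A 1 2)]
      exact pow_eq_zero_iff (two_ne_zero) |>.mp h1
    have hf : A 1 2 = 0 := by
      have h1 : A 1 2 ^ 2 = 0 := by nlinarith [sq_nonneg (A 0 2), sq_nonneg (A 1 2)]
      exact pow_eq_zero_iff (two_ne_zero) |>.mp h1
    have hr2 : A 2 2 ^ 2 = 1 := by linarith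
    have hpq : A 2 0 ^ 2 + A 2 1 ^ 2 = 0 := by linarith
    have hp : A 2 0 = 0 := by
      have h1 : A 2 0 ^ 2 = 0 := by nlinarith [sq_nonneg (A 2 0), sq_nonneg (A 2 1)]
      exact pow_eq_zero_iff (two_ne_zero) |>.mp h1
    have hq : A 2 1 = 0 := by
      have h1 : A 2 1 ^ 2 = 0 := by nlinarith [sq_nonneg (A 2 0), sq_nonneg (A 2 1)]
      exact pow_eq_zero_iff (two_ne_zero) |>.mp h1
    obtain ⟨θ, hcos, hsin⟩ := circle_param (x := A 0 0) (y := A 1 0)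
      (by nlinarith [hC1, hp])
    have hrr : A 2 2 = 1 ∨ A 2 2 = -1 := by
      rcases mul_eq_zero.mp (show (A 2 2 - 1) * (A 2 2 + 1) = 0 by linear_combination hr2)
        with h | h
      · left; linarith
      · right; linarith
    rcases hrr with hr | hr
    · refine ⟨θ, 0, 0, Subtype.ext ?_⟩
      have he : A 1 1 = A 0 0 := by
        linear_combination -hadj_a - A 1 1 * hr + A 1 2 * hq
      have hb : A 0 1 = -(A 1 0) := by
        linear_combination hadj_b - A 1 0 * hr + A 2 0 * hf
      show A = Rz θ * Rx 0 * Rz 0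
      rw [RzRxRz]
      ext i j
      fin_cases i <;> fin_cases j <;>
        simp [Matrix.vecHead, Matrix.vecTail, hc, hf, hp, hq, hr, he, hb, hcos, hsin]
    · refine ⟨θ, Real.pi, 0, Subtype.ext ?_⟩
      have he : A 1 1 = -(A 0 0) := by
        linear_combination hadj_a + A 1 1 * hr - A 1 2 * hq
      have hb : A 0 1 = A 1 0 := by
        linear_combination hadj_b - A 1 0 * hr + A 2 0 * hf
      show A = Rz θ * Rx Real.pi * Rz 0
      rw [RzRxRz]
      ext i j
      fin_cases i <;> fin_cases j <;>
        simp [Matrix.vecHead, Matrix.vecTail, hc, hf, hp, hq, hr, he, hb, hcos, hsin]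
  · -- main case
    have hcf' : 0 ≤ A 0 2 ^ 2 + A 1 2 ^ 2 := by positivity
    set s : ℝ := Real.sqrt (A 0 2 ^ 2 + A 1 2 ^ 2) with hs_def
    have hs2 : s ^ 2 = A 0 2 ^ 2 + A 1 2 ^ 2 := Real.sq_sqrt hcf'
    have hs_pos : 0 < s := Real.sqrt_pos.mpr (lt_of_le_of_ne hcf' (Ne.symm hcf))
    have hs_ne : s ≠ 0 := ne_of_gt hs_pos
    have hs2' : s ^ 2 = 1 - A 2 2 ^ 2 := by linarith
    have hrb1 : -1 ≤ A 2 2 := by nlinarith [sq_nonneg (A 0 2), sq_nonneg (A 1 2), sq_nonneg (A 2 2 + 1)]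
    have hrb2 : A 2 2 ≤ 1 := by nlinarith [sq_nonneg (A 0 2), sq_nonneg (A 1 2), sq_nonneg (A 2 2 - 1)]
    have hcosβ : Real.cos (Real.arccos (A 2 2)) = A 2 2 := Real.cos_arccos hrb1 hrb2
    have hsinβ : Real.sin (Real.arccos (A 2 2)) = s := by
      rw [Real.sin_arccos, show 1 - A 2 2 ^ 2 = A 0 2 ^ 2 + A 1 2 ^ 2 from by linarith]
    obtain ⟨α, hcosα, hsinα⟩ := circle_param (x := -(A 1 2) / s) (y := A 0 2 / s)
      (by field_simp; linear_combination -hs2)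
    obtain ⟨γ, hcosγ, hsinγ⟩ := circle_param (x := A 2 1 / s) (y := A 2 0 / s)
      (by field_simp; linear_combination hR3 - hs2')
    refine ⟨α, Real.arccos (A 2 2), γ, Subtype.ext ?_⟩
    show A = Rz α * Rx (Real.arccos (A 2 2)) * Rz γ
    rw [RzRxRz]
    ext i j
    fin_cases i <;> fin_cases j <;>
      simp [Matrix.vecHead, Matrix.vecTail, hcosα, hsinα, hcosβ, hsinβ, hcosγ, hsinγ]
    · -- (0,0)
      field_simp
      linear_combination hadj_a + A 2 2 * hadj_e + A 0 0 * hs2'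
    · -- (0,1)
      field_simp
      linear_combination hadj_b - A 2 2 * hadj_d + A 0 1 * hs2'
    · -- (0,2)
      field_simp
    · -- (1,0)
      field_simp
      linear_combination hadj_d - A 2 2 * hadj_b + A 1 0 * hs2'
    · -- (1,1)
      field_simp
      linear_combination hadj_e + A 2 2 * hadj_a + A 1 1 * hs2'
    · -- (1,2)
      field_simp
    · -- (2,0)
      field_simp
    · -- (2,1)
      field_simp

variable (φ : SO3 →* SU2)

lemma phi_inv_sq {g : SO3} (h : g * g = 1) : φ g * φ g = 1 := by
  rw [← φ.map_mul, h, φ.map_one]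

lemma phi_Rz (θ : ℝ) : φ (RzS θ) = 1 := by
  have hdecomp : ∀ a : ℝ, RzS a = TS a * TS 0 := by
    intro a
    rw [TS_mul, sub_zero]
  set x := φ (TS (θ/2)) with hx
  set y := φ (TS 0) with hy
  have hxx : x * x = 1 := phi_inv_sq φ (TS_sq (θ/2))
  have hyy : y * y = 1 := phi_inv_sq φ (TS_sq 0)
  have hcomm : x * y = y * x := su2_comm x y hxx hyy
  have : φ (RzS θ) = (x * y) * (x * y) := by
    rw [← RzS_sq θ, φ.map_mul, hdecomp (θ/2), φ.map_mul]
  rw [this]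
  calc (x * y) * (x * y) = x * (y * x) * y := by group
    _ = x * (x * y) * y := by rw [hcomm]
    _ = (x * x) * (y * y) := by group
    _ = 1 := by rw [hxx, hyy, one_mul]

lemma phi_Rx (θ : ℝ) : φ (RxS θ) = 1 := by
  have hdecomp : ∀ a : ℝ, RxS a = US a * US 0 := by
    intro a
    rw [US_mul, sub_zero]
  set x := φ (US (θ/2)) with hx
  set y := φ (US 0) with hy
  have hxx : x * x = 1 := phi_inv_sq φ (US_sq (θ/2))
  have hyy : y * y = 1 := phi_inv_sq φ (US_sq 0)
  have hcomm : x * y = y * x := su2_comm x y hxx hyy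
  have : φ (RxS θ) = (x * y) * (x * y) := by
    rw [← RxS_sq θ, φ.map_mul, hdecomp (θ/2), φ.map_mul]
  rw [this]
  calc (x * y) * (x * y) = x * (y * x) * y := by group
    _ = x * (x * y) * y := by rw [hcomm]
    _ = (x * x) * (y * y) := by group
    _ = 1 := by rw [hxx, hyy, one_mul]

/-- Every continuous group homomorphism from `SO(3)` to `SU(2)`
(the group of `2 × 2` complex matrices `U` with `U*U = 1` and `det U = 1`) is trivial. -/
theorem triviality_of_continuous_hom_SO3_to_SU2
    (φ : ↥(Matrix.specialOrthogonalGroup (Fin 3) ℝ) →* ↥(Matrix.specialUnitaryGroup (Fin 2) ℂ))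
    (hφ : Continuous φ) :
    ∀ g, φ g = 1 := by
  intro g
  obtain ⟨α, β, γ, rfl⟩ := euler g
  rw [φ.map_mul, φ.map_mul, phi_Rz, phi_Rx, phi_Rz, one_mul, one_mul]
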